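/- The set of well-approximated irrational numbers is dense in ℝ. -/

import Mathlib

open Filter Topology

/-- Iterates of the Gauss map starting at `θ`. -/
noncomputable def gaussIter (θ : ℝ) : ℕ → ℝ
  | 0 => θ
  | k + 1 => (Int.fract (gaussIter θ k))⁻¹

/-- The `k`-th partial quotient (digit) of the continued fraction of `θ`. -/
noncomputable def cfA (θ : ℝ) (k : ℕ) : ℤ := ⌊gaussIter θ k⌋

/-- Numerators of the continued fraction convergents of `θ`. -/
noncomputable def cfP (θ : ℝ) : ℕ → ℤ
  | 0 => cfA θ 0
  | 1 => cfA θ 1 * cfA θ 0 + 1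
  | k + 2 => cfA θ (k + 2) * cfP θ (k + 1) + cfP θ k

/-- Denominators of the continued fraction convergents of `θ`. -/
noncomputable def cfQ (θ : ℝ) : ℕ → ℤ
  | 0 => 1
  | 1 => cfA θ 1
  | k + 2 => cfA θ (k + 2) * cfQ θ (k + 1) + cfQ θ k

/-- An irrational number `θ` is *well-approximated* if there is an increasing sequence
`k n` of natural numbers such that for every constant `C > 0`,
`exp (C * q (k n)) / q (k n + 1) → 0` as `n → ∞`. -/
def WellApproximated (θ : ℝ) : Prop :=
  Irrational θ ∧ ∃ k : ℕ → ℕ, StrictMono k ∧ ∀ C : ℝ, 0 < C →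
    Tendsto (fun n => Real.exp (C * (cfQ θ (k n) : ℝ)) / (cfQ θ (k n + 1) : ℝ))
      atTop (𝓝 0)

namespace WAaux

/-- Numerators from a digit sequence. -/
noncomputable def cP (c : ℕ → ℤ) : ℕ → ℤ
  | 0 => c 0
  | 1 => c 1 * c 0 + 1
  | k + 2 => c (k + 2) * cP c (k + 1) + cP c k

/-- Denominators from a digit sequence. -/
noncomputable def cQ (c : ℕ → ℤ) : ℕ → ℤ
  | 0 => 1
  | 1 => c 1
  | k + 2 => c (k + 2) * cQ c (k + 1) + cQ c k

def Good (c : ℕ → ℤ) : Prop := ∀ k, 1 ≤ c (k + 1)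
def Pos (c : ℕ → ℤ) : Prop := ∀ k, 1 ≤ c k

lemma Pos.good {c : ℕ → ℤ} (h : Pos c) : Good c := fun k => h (k + 1)

def shft (c : ℕ → ℤ) (m : ℕ) : ℕ → ℤ := fun j => c (j + m)

lemma Good.shft_pos {c : ℕ → ℤ} (h : Good c) : Pos (shft c 1) := fun k => h k

lemma Good.shft {c : ℕ → ℤ} (h : Good c) (m : ℕ) : Good (shft c m) := by
  intro k
  show 1 ≤ c (k + 1 + m)
  rw [show k + 1 + m = k + m + 1 by omega]
  exact h (k + m)

lemma shft_shft (c : ℕ → ℤ) (m : ℕ) : shft (shft c m) 1 = shft c (m + 1) := by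
  funext j; simp [WAaux.shft]; ring_nf

lemma Q_pos {c : ℕ → ℤ} (h : Good c) : ∀ n, 1 ≤ cQ c n := by
  intro n
  induction n using Nat.twoStepInduction with
  | zero => simp [cQ]
  | one => simpa [cQ] using h 0
  | more n h1 h2 =>
    have := h (n + 1)
    simp only [cQ]
    nlinarith

lemma Q_ge {c : ℕ → ℤ} (h : Good c) : ∀ n : ℕ, (n : ℤ) ≤ cQ c n := by
  intro n
  induction n using Nat.twoStepInduction with
  | zero => simp [cQ]
  | one => simpa [cQ] using h 0
  | more n h1 h2 =>
    have h3 : 1 ≤ c (n + 2) := h (n + 1)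
    have h4 := Q_pos h n
    have h5 := Q_pos h (n + 1)
    have h6 : cQ c (n + 1) ≤ c (n + 2) * cQ c (n + 1) :=
      le_mul_of_one_le_left (by linarith) h3
    simp only [cQ]
    push_cast at h2 ⊢
    linarith

lemma det (c : ℕ → ℤ) : ∀ n, cP c (n + 1) * cQ c n - cP c n * cQ c (n + 1) = (-1) ^ n := by
  intro n
  induction n with
  | zero => simp [cP, cQ]; ring
  | succ n ih =>
    simp only [cP, cQ, pow_succ]
    cases n with
    | zero => simp [cP, cQ] at ih ⊢; nlinarith [ih]
    | succ m =>
      simp only [cP, cQ] at ih ⊢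
      nlinarith [ih]

lemma P_ge_Q {c : ℕ → ℤ} (h : Pos c) : ∀ n, cQ c n ≤ cP c n := by
  intro n
  induction n using Nat.twoStepInduction with
  | zero => simpa [cP, cQ] using h 0
  | one =>
    have := h 0; have := h 1
    simp only [cP, cQ]; nlinarith
  | more n h1 h2 =>
    have := h (n + 2)
    simp only [cP, cQ]
    nlinarith

lemma P_pos {c : ℕ → ℤ} (h : Pos c) (n : ℕ) : 1 ≤ cP c n :=
  le_trans (Q_pos h.good n) (P_ge_Q h n)

/-- Convergents as reals. -/
noncomputable def conv (c : ℕ → ℤ) (n : ℕ) : ℝ := (cP c n : ℝ) / (cQ c n : ℝ)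

lemma conv_dist {c : ℕ → ℤ} (h : Good c) (n : ℕ) :
    dist (conv c n) (conv c (n + 1)) ≤ 2 / ((n : ℝ) + 1) ^ 2 := by
  have hq1 : (1 : ℝ) ≤ (cQ c n : ℝ) := by exact_mod_cast Q_pos h n
  have hq2 : (1 : ℝ) ≤ (cQ c (n + 1) : ℝ) := by exact_mod_cast Q_pos h (n + 1)
  have hg1 : (n : ℝ) ≤ (cQ c n : ℝ) := by exact_mod_cast Q_ge h n
  have hg2 : ((n : ℝ) + 1) ≤ (cQ c (n + 1) : ℝ) := by exact_mod_cast Q_ge h (n + 1)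
  have hd : conv c n - conv c (n + 1) =
      ((cP c n * cQ c (n + 1) - cP c (n + 1) * cQ c n : ℤ) : ℝ)
        / ((cQ c n : ℝ) * (cQ c (n + 1) : ℝ)) := by
    rw [conv, conv, div_sub_div _ _ (by linarith) (by linarith)]
    congr 1 <;> push_cast <;> ring
  have hdet : ((cP c n * cQ c (n + 1) - cP c (n + 1) * cQ c n : ℤ) : ℝ) = -((-1 : ℝ) ^ n) := by
    have := det c n
    have : (cP c n * cQ c (n + 1) - cP c (n + 1) * cQ c n : ℤ) = -((-1) ^ n) := by linarith
    rw [this]; push_cast; ring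
  rw [Real.dist_eq, hd, hdet]
  rw [abs_div, abs_neg, abs_pow, abs_neg, abs_one, one_pow]
  rw [abs_of_pos (by nlinarith)]
  rw [div_le_div_iff₀ (by nlinarith) (by positivity)]
  have hn0 : (0 : ℝ) ≤ (n : ℝ) := Nat.cast_nonneg n
  nlinarith [mul_le_mul hg1 hg2 (by linarith) (by linarith),
    mul_le_mul hq1 hq2 (by linarith) (by linarith)]

lemma conv_cauchy {c : ℕ → ℤ} (h : Good c) : CauchySeq (conv c) := by
  apply cauchySeq_of_dist_le_of_summable (fun n => 2 / ((n : ℝ) + 1) ^ 2)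
  · exact conv_dist h
  · have : Summable (fun n : ℕ => ((n : ℝ) + 1) ^ (-2 : ℤ)) := by
      have := (Real.summable_nat_rpow_inv (p := 2)).2 (by norm_num)
      have h2 := (summable_nat_add_iff (f := fun n : ℕ => ((n : ℝ) ^ 2)⁻¹) 1).2 this
      simpa [zpow_neg, Real.rpow_natCast] using h2
    have h3 := this.mul_left 2
    apply h3.congr
    intro n
    have : ((n:ℝ)+1) ^ (-2:ℤ) = (((n:ℝ)+1)^2)⁻¹ := by
      rw [zpow_neg]; norm_cast
    rw [this]; ring

/-- The value of an infinite continued fraction. -/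
noncomputable def cfVal (c : ℕ → ℤ) : ℝ := limUnder atTop (conv c)

lemma conv_tendsto {c : ℕ → ℤ} (h : Good c) : Tendsto (conv c) atTop (𝓝 (cfVal c)) :=
  (conv_cauchy h).tendsto_limUnder

lemma cfVal_ge_one {c : ℕ → ℤ} (h : Pos c) : 1 ≤ cfVal c := by
  apply ge_of_tendsto (conv_tendsto h.good)
  filter_upwards with n
  have h1 : (1 : ℝ) ≤ (cQ c n : ℝ) := by exact_mod_cast Q_pos h.good n
  have h2 : (cQ c n : ℝ) ≤ (cP c n : ℝ) := by exact_mod_cast P_ge_Q h n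
  rw [conv, le_div_iff₀ (by linarith)]
  linarith

lemma shft_apply (c : ℕ → ℤ) (m j : ℕ) : shft c m j = c (j + m) := rfl

lemma Q_shift (c : ℕ → ℤ) : ∀ n, cQ c (n + 1) = cP (shft c 1) n := by
  intro n
  induction n using Nat.twoStepInduction with
  | zero => simp [cQ, cP, shft_apply]
  | one => simp [cQ, cP, shft_apply]
  | more n h1 h2 =>
    show cQ c (n + 1 + 2) = cP (shft c 1) (n + 2)
    rw [cQ, cP, h1, show cQ c (n + 1 + 1) = cP (shft c 1) (n + 1) from h2,
      shft_apply, show n + 2 + 1 = n + 1 + 2 from rfl]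

lemma P_shift (c : ℕ → ℤ) : ∀ n, cP c (n + 1) = c 0 * cP (shft c 1) n + cQ (shft c 1) n := by
  intro n
  induction n using Nat.twoStepInduction with
  | zero => simp [cQ, cP, shft_apply]; ring
  | one => simp [cQ, cP, shft_apply]; ring
  | more n h1 h2 =>
    show cP c (n + 1 + 2) = c 0 * cP (shft c 1) (n + 2) + cQ (shft c 1) (n + 2)
    rw [cP, show cP (shft c 1) (n + 2) = shft c 1 (n + 2) * cP (shft c 1) (n + 1) + cP (shft c 1) n from rfl,
      show cQ (shft c 1) (n + 2) = shft c 1 (n + 2) * cQ (shft c 1) (n + 1) + cQ (shft c 1) n from rfl, h1,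
      show cP c (n + 1 + 1) = c 0 * cP (shft c 1) (n + 1) + cQ (shft c 1) (n + 1) from h2,
      shft_apply, show n + 2 + 1 = n + 1 + 2 from rfl]
    ring


lemma conv_shift {c : ℕ → ℤ} (h : Good c) (n : ℕ) :
    conv c (n + 1) = (c 0 : ℝ) + (conv (shft c 1) n)⁻¹ := by
  have hp : (1 : ℝ) ≤ (cP (shft c 1) n : ℝ) := by exact_mod_cast P_pos h.shft_pos n
  have hq : (1 : ℝ) ≤ (cQ (shft c 1) n : ℝ) := by exact_mod_cast Q_pos h.shft_pos.good n
  rw [conv, conv, P_shift, Q_shift, inv_div]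
  push_cast
  have hP0 : (cP (shft c 1) n : ℝ) ≠ 0 := by linarith
  field_simp

lemma cfVal_shift {c : ℕ → ℤ} (h : Good c) :
    cfVal c = (c 0 : ℝ) + (cfVal (shft c 1))⁻¹ := by
  have h1 : Tendsto (fun n => conv c (n + 1)) atTop (𝓝 (cfVal c)) :=
    (conv_tendsto h).comp (tendsto_add_atTop_nat 1)
  have hσ1 : (1 : ℝ) ≤ cfVal (shft c 1) := cfVal_ge_one h.shft_pos
  have h2 : Tendsto (fun n => (c 0 : ℝ) + (conv (shft c 1) n)⁻¹) atTop
      (𝓝 ((c 0 : ℝ) + (cfVal (shft c 1))⁻¹)) :=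
    tendsto_const_nhds.add ((conv_tendsto h.shft_pos.good).inv₀ (by linarith))
  refine tendsto_nhds_unique (h1.congr fun n => ?_) h2
  exact conv_shift h n

lemma one_lt_cfVal_shft {c : ℕ → ℤ} (h : Good c) : 1 < cfVal (shft c 1) := by
  have hg : Good (shft c 1) := h.shft_pos.good
  have h1 : (1 : ℝ) ≤ cfVal (shft (shft c 1) 1) := cfVal_ge_one hg.shft_pos
  have h2 := cfVal_shift hg
  have h3 : (1 : ℝ) ≤ ((shft c 1) 0 : ℤ) := by exact_mod_cast h.shft_pos 0
  have h4 : (0 : ℝ) < (cfVal (shft (shft c 1) 1))⁻¹ := by positivity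
  push_cast at h3
  linarith

lemma cfVal_mem {c : ℕ → ℤ} (h : Good c) :
    cfVal c ∈ Set.Ioo (c 0 : ℝ) ((c 0 : ℝ) + 1) := by
  have h1 := one_lt_cfVal_shft h
  have h2 := cfVal_shift h
  have h3 : (0 : ℝ) < (cfVal (shft c 1))⁻¹ := by positivity
  have h4 : (cfVal (shft c 1))⁻¹ < 1 := by
    rw [inv_lt_one_iff₀]; right; exact h1
  constructor <;> [linarith; linarith]

lemma floor_cfVal {c : ℕ → ℤ} (h : Good c) : ⌊cfVal c⌋ = c 0 := by
  obtain ⟨h1, h2⟩ := cfVal_mem h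
  rw [Int.floor_eq_iff]
  exact ⟨le_of_lt h1, h2⟩

lemma fract_cfVal {c : ℕ → ℤ} (h : Good c) :
    Int.fract (cfVal c) = (cfVal (shft c 1))⁻¹ := by
  rw [Int.fract, floor_cfVal h, cfVal_shift h]
  ring


lemma gauss_cfVal {c : ℕ → ℤ} (h : Good c) : ∀ k, gaussIter (cfVal c) k = cfVal (shft c k) := by
  intro k
  induction k with
  | zero => rfl
  | succ k ih =>
    show (Int.fract (gaussIter (cfVal c) k))⁻¹ = _
    rw [ih, fract_cfVal (h.shft k), inv_inv, shft_shft]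

lemma cfA_cfVal {c : ℕ → ℤ} (h : Good c) (k : ℕ) : cfA (cfVal c) k = c k := by
  rw [cfA, gauss_cfVal h, floor_cfVal (h.shft k), shft_apply]
  norm_num

lemma cfP_cfQ_cfVal {c : ℕ → ℤ} (h : Good c) :
    ∀ n, cfP (cfVal c) n = cP c n ∧ cfQ (cfVal c) n = cQ c n := by
  intro n
  induction n using Nat.twoStepInduction with
  | zero => simp [cfP, cfQ, cP, cQ, cfA_cfVal h]
  | one => simp [cfP, cfQ, cP, cQ, cfA_cfVal h]
  | more n h1 h2 =>
    constructor
    · show cfA (cfVal c) (n + 2) * cfP (cfVal c) (n + 1) + cfP (cfVal c) n = _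
      rw [cfA_cfVal h, h1.1, h2.1]; rfl
    · show cfA (cfVal c) (n + 2) * cfQ (cfVal c) (n + 1) + cfQ (cfVal c) n = _
      rw [cfA_cfVal h, h1.2, h2.2]; rfl

lemma gaussIter_succ_eq (x : ℝ) : ∀ k, gaussIter x (k + 1) = gaussIter ((Int.fract x)⁻¹) k := by
  intro k
  induction k with
  | zero => rfl
  | succ k ih =>
    show (Int.fract (gaussIter x (k + 1)))⁻¹ = (Int.fract (gaussIter ((Int.fract x)⁻¹) k))⁻¹
    rw [ih]

lemma rat_hits_int : ∀ v : ℕ, ∀ m : ℤ, ∀ x : ℝ, x = (m : ℝ) / (v : ℝ) →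
    ∃ k : ℕ, ∃ z : ℤ, gaussIter x k = (z : ℝ) := by
  intro v
  induction v using Nat.strong_induction_on with
  | _ v ih =>
    intro m x hx
    rcases Nat.eq_zero_or_pos v with hv | hv
    · subst hv
      exact ⟨0, 0, by simp [hx, gaussIter]⟩
    · set r : ℤ := m % (v : ℤ) with hrdef
      have hr0 : 0 ≤ r := Int.emod_nonneg m (by positivity)
      have hrv : r < (v : ℤ) := Int.emod_lt_of_pos m (by exact_mod_cast hv)
      have hm : m = (v : ℤ) * (m / (v : ℤ)) + r := (Int.mul_ediv_add_emod m (v : ℤ)).symm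
      have hxsplit : x = ((m / (v : ℤ) : ℤ) : ℝ) + (r : ℝ) / (v : ℝ) := by
        rw [hx]
        rw [show (m : ℝ) = ((v : ℤ) * (m / (v : ℤ)) + r : ℤ) from by exact_mod_cast hm]
        push_cast
        field_simp
      rcases eq_or_lt_of_le hr0 with hr | hr
      · refine ⟨0, m / (v : ℤ), ?_⟩
        show x = _
        rw [hxsplit, ← hr]
        simp
      · have hfr : Int.fract x = (r : ℝ) / (v : ℝ) := by
          rw [hxsplit, Int.fract_intCast_add, Int.fract_eq_self]
          constructor
          · positivity
          · rw [div_lt_one (by exact_mod_cast hv)]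
            exact_mod_cast hrv
        have hrnat : r.toNat < v := by omega
        have hinv : (Int.fract x)⁻¹ = ((v : ℤ) : ℝ) / ((r.toNat : ℕ) : ℝ) := by
          have hcast : ((r.toNat : ℕ) : ℝ) = (r : ℝ) := by exact_mod_cast Int.toNat_of_nonneg hr0
          rw [hfr, inv_div, hcast]
          norm_num
        obtain ⟨k, z, hk⟩ := ih r.toNat hrnat (v : ℤ) ((Int.fract x)⁻¹) hinv
        exact ⟨k + 1, z, by rw [gaussIter_succ_eq]; exact hk⟩

lemma irrational_cfVal {c : ℕ → ℤ} (h : Good c) : Irrational (cfVal c) := by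
  by_contra hc
  rw [Irrational] at hc
  push_neg at hc
  obtain ⟨q, hq⟩ := hc
  have hx : cfVal c = ((q.num : ℤ) : ℝ) / ((q.den : ℕ) : ℝ) := by
    rw [← hq, Rat.cast_def]
  obtain ⟨k, z, hk⟩ := rat_hits_int q.den q.num (cfVal c) hx
  rw [gauss_cfVal h] at hk
  obtain ⟨h1, h2⟩ := cfVal_mem (h.shft k)
  rw [hk] at h1 h2
  have e1 : (shft c k) 0 < z := by exact_mod_cast h1
  have e2 : (z : ℝ) < ((shft c k) 0 + 1 : ℤ) := by push_cast; linarith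
  have e3 : z < (shft c k) 0 + 1 := by exact_mod_cast e2
  omega

lemma gauss_irrational {x : ℝ} (hx : Irrational x) : ∀ k, Irrational (gaussIter x k) := by
  intro k
  induction k with
  | zero => exact hx
  | succ k ih =>
    show Irrational (Int.fract (gaussIter x k))⁻¹
    rw [Int.fract]
    exact (ih.sub_intCast _).inv

lemma fract_gauss_mem {x : ℝ} (hx : Irrational x) (k : ℕ) :
    Int.fract (gaussIter x k) ∈ Set.Ioo (0 : ℝ) 1 := by
  refine ⟨?_, Int.fract_lt_one _⟩
  rw [Int.fract_pos]
  exact (gauss_irrational hx k).ne_int _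

lemma one_lt_gauss {x : ℝ} (hx : Irrational x) (k : ℕ) : 1 < gaussIter x (k + 1) := by
  obtain ⟨h1, h2⟩ := fract_gauss_mem hx k
  show 1 < (Int.fract (gaussIter x k))⁻¹
  rw [lt_inv_comm₀ one_pos h1]
  simpa using h2

lemma gauss_rec {x : ℝ} (hx : Irrational x) (k : ℕ) :
    gaussIter x k = (cfA x k : ℝ) + (gaussIter x (k + 1))⁻¹ := by
  obtain ⟨h1, h2⟩ := fract_gauss_mem hx k
  have : (gaussIter x (k + 1))⁻¹ = Int.fract (gaussIter x k) := by
    show ((Int.fract (gaussIter x k))⁻¹)⁻¹ = _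
    rw [inv_inv]
  rw [this, cfA, Int.fract]
  ring

lemma cfA_good {x : ℝ} (hx : Irrational x) : Good (fun k => cfA x k) := by
  intro k
  have := one_lt_gauss hx (k + 1)
  show (1 : ℤ) ≤ ⌊gaussIter x (k + 1)⌋
  exact Int.le_floor.2 (by push_cast; linarith [one_lt_gauss hx k])

/-- The key linear-fractional formula. -/
lemma formula (c : ℕ → ℤ) (t : ℕ → ℝ)
    (ht : ∀ k, t k = (c k : ℝ) + (t (k + 1))⁻¹) (hpos : ∀ k, 1 < t (k + 1)) :
    ∀ n, t 0 * ((cQ c (n + 1) : ℝ) * t (n + 2) + (cQ c n : ℝ)) =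
      (cP c (n + 1) : ℝ) * t (n + 2) + (cP c n : ℝ) := by
  have hne : ∀ k, t (k + 1) ≠ 0 := fun k => by have := hpos k; linarith
  have he : ∀ k, t k * t (k + 1) = (c k : ℝ) * t (k + 1) + 1 := by
    intro k
    rw [ht k, add_mul, inv_mul_cancel₀ (hne k)]
  intro n
  induction n with
  | zero =>
    have e0 : t 0 * t 1 = (c 0 : ℝ) * t 1 + 1 := he 0
    have e1 : t 1 * t 2 = (c 1 : ℝ) * t 2 + 1 := he 1
    show t 0 * ((cQ c 1 : ℝ) * t 2 + (cQ c 0 : ℝ)) = (cP c 1 : ℝ) * t 2 + (cP c 0 : ℝ)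
    rw [show cQ c 1 = c 1 from rfl, show cQ c 0 = 1 from rfl,
      show cP c 1 = c 1 * c 0 + 1 from rfl, show cP c 0 = c 0 from rfl]
    push_cast
    linear_combination (t 2) * e0 - (t 0 - (c 0 : ℝ)) * e1
  | succ n ih =>
    have e2 : t (n + 2) * t (n + 3) = (c (n + 2) : ℝ) * t (n + 3) + 1 := he (n + 2)
    show t 0 * ((cQ c (n + 2) : ℝ) * t (n + 3) + (cQ c (n + 1) : ℝ)) =
      (cP c (n + 2) : ℝ) * t (n + 3) + (cP c (n + 1) : ℝ)
    rw [show cQ c (n + 2) = c (n + 2) * cQ c (n + 1) + cQ c n from rfl,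
      show cP c (n + 2) = c (n + 2) * cP c (n + 1) + cP c n from rfl]
    push_cast
    linear_combination (t (n + 3)) * ih - (t 0 * (cQ c (n + 1) : ℝ) - (cP c (n + 1) : ℝ)) * e2

lemma PQ_congr (c c' : ℕ → ℤ) : ∀ n, (∀ k, k ≤ n → c k = c' k) →
    cP c n = cP c' n ∧ cQ c n = cQ c' n := by
  intro n
  induction n using Nat.twoStepInduction with
  | zero => intro h; simp [cP, cQ, h 0 (by omega)]
  | one => intro h; simp [cP, cQ, h 0 (by omega), h 1 (by omega)]
  | more n h1 h2 =>
    intro h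
    have g1 := h1 (fun k hk => h k (by omega))
    have g2 := h2 (fun k hk => h k (by omega))
    constructor
    · show c (n + 2) * cP c (n + 1) + cP c n = c' (n + 2) * cP c' (n + 1) + cP c' n
      rw [h (n + 2) (by omega), g1.1, g2.1]
    · show c (n + 2) * cQ c (n + 1) + cQ c n = c' (n + 2) * cQ c' (n + 1) + cQ c' n
      rw [h (n + 2) (by omega), g1.2, g2.2]

/-! ### The extension construction -/

/-- `(digit, Q_k, Q_{k-1})` along the extended sequence. -/
noncomputable def extSeq (b : ℕ → ℤ) (M : ℕ) : ℕ → ℤ × ℤ × ℤ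
  | 0 => (b 0, 1, 0)
  | k + 1 =>
    let p := extSeq b M k
    let a : ℤ := if k + 1 ≤ M then b (k + 1) else max 1 ⌈Real.exp (((k : ℝ) + 1) * (p.2.1 : ℝ))⌉
    (a, a * p.2.1 + p.2.2, p.2.1)

noncomputable def aext (b : ℕ → ℤ) (M : ℕ) (k : ℕ) : ℤ := (extSeq b M k).1

lemma aext_prefix (b : ℕ → ℤ) (M : ℕ) {k : ℕ} (hk : k ≤ M) : aext b M k = b k := by
  rcases k with _ | k
  · rfl
  · show (extSeq b M (k + 1)).1 = b (k + 1)
    rw [extSeq]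
    simp only [if_pos hk]

lemma aext_good (b : ℕ → ℤ) (M : ℕ) (hb : Good b) : Good (aext b M) := by
  intro k
  show (extSeq b M (k + 1)).1 ≥ 1
  rw [extSeq]
  simp only
  split
  · exact hb k
  · exact le_max_left _ _

lemma extSeq_snd (b : ℕ → ℤ) (M : ℕ) (hb : Good b) :
    ∀ k, (extSeq b M k).2.1 = cQ (aext b M) k := by
  have hg := aext_good b M hb
  intro k
  induction k using Nat.twoStepInduction with
  | zero => rfl
  | one =>
    show (extSeq b M 1).2.1 = cQ (aext b M) 1
    have e : (extSeq b M 1).2.1 = (extSeq b M 1).1 * 1 + 0 := rfl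
    rw [e, show cQ (aext b M) 1 = aext b M 1 from rfl, aext]
    ring
  | more k h1 h2 =>
    show aext b M (k + 2) * (extSeq b M (k + 1)).2.1 + (extSeq b M k).2.1
      = cQ (aext b M) (k + 2)
    rw [h1, h2]
    rfl

lemma aext_tail (b : ℕ → ℤ) (M : ℕ) (hb : Good b) {k : ℕ} (hk : M < k + 1) :
    Real.exp (((k : ℝ) + 1) * (cQ (aext b M) k : ℝ)) ≤ ((aext b M (k + 1) : ℤ) : ℝ) := by
  have : aext b M (k + 1) = max 1 ⌈Real.exp (((k : ℝ) + 1) * ((extSeq b M k).2.1 : ℝ))⌉ := by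
    show (extSeq b M (k + 1)).1 = _
    rw [extSeq]
    simp only [if_neg (by omega : ¬ (k + 1 ≤ M))]
  rw [this, extSeq_snd b M hb]
  have h1 := Int.le_ceil (Real.exp (((k : ℝ) + 1) * (cQ (aext b M) k : ℝ)))
  have h2 : (⌈Real.exp (((k : ℝ) + 1) * (cQ (aext b M) k : ℝ))⌉ : ℝ) ≤
      ((max 1 ⌈Real.exp (((k : ℝ) + 1) * (cQ (aext b M) k : ℝ))⌉ : ℤ) : ℝ) := by
    exact_mod_cast le_max_right _ _
  linarith

lemma Q_ge_digit {c : ℕ → ℤ} (h : Good c) : ∀ k, c (k + 1) ≤ cQ c (k + 1) := by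
  intro k
  rcases k with _ | k
  · simp [cQ]
  · show c (k + 2) ≤ c (k + 2) * cQ c (k + 1) + cQ c k
    have h1 := Q_pos h (k + 1)
    have h2 := Q_pos h k
    have h3 := h (k + 1)
    nlinarith

lemma Q_tail (b : ℕ → ℤ) (M : ℕ) (hb : Good b) {k : ℕ} (hk : M < k + 1) :
    Real.exp (((k : ℝ) + 1) * (cQ (aext b M) k : ℝ)) ≤ ((cQ (aext b M) (k + 1) : ℤ) : ℝ) := by
  have h1 := aext_tail b M hb hk
  have h2 : aext b M (k + 1) ≤ cQ (aext b M) (k + 1) := Q_ge_digit (aext_good b M hb) k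
  have h2' : ((aext b M (k + 1) : ℤ) : ℝ) ≤ ((cQ (aext b M) (k + 1) : ℤ) : ℝ) := by exact_mod_cast h2
  linarith


lemma wa_cfVal (b : ℕ → ℤ) (M : ℕ) (hb : Good b) :
    WellApproximated (cfVal (aext b M)) := by
  set a := aext b M with hadef
  have ha : Good a := aext_good b M hb
  set θ := cfVal a with hθdef
  have hθirr : Irrational θ := irrational_cfVal ha
  refine ⟨hθirr, fun n => M + 1 + n, fun m n h => by simpa using h, ?_⟩
  intro C hC
  have hQeq : ∀ m, cfQ θ m = cQ a m := fun m => (cfP_cfQ_cfVal ha m).2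
  simp only [hQeq]
  have hQ1 : ∀ m, (1 : ℝ) ≤ (cQ a m : ℝ) := fun m => by exact_mod_cast Q_pos ha m
  apply squeeze_zero' (g := fun n : ℕ => Real.exp (C - 1 - n))
  · filter_upwards with n
    have := hQ1 (M + 1 + n + 1)
    positivity
  · filter_upwards [eventually_ge_atTop ⌈C⌉₊] with n hn
    have hnC : C ≤ (n : ℝ) := le_trans (Nat.le_ceil C) (by exact_mod_cast hn)
    set k : ℕ := M + 1 + n with hkdef
    have htail : Real.exp (((k : ℝ) + 1) * (cQ a k : ℝ)) ≤ ((cQ a (k + 1) : ℤ) : ℝ) :=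
      Q_tail b M hb (by omega)
    have hQk : (1 : ℝ) ≤ (cQ a k : ℝ) := hQ1 k
    calc Real.exp (C * (cQ a k : ℝ)) / (cQ a (k + 1) : ℝ)
        ≤ Real.exp (C * (cQ a k : ℝ)) / Real.exp (((k : ℝ) + 1) * (cQ a k : ℝ)) :=
          div_le_div_of_nonneg_left (Real.exp_pos _).le (Real.exp_pos _) htail
      _ = Real.exp (C * (cQ a k : ℝ) - ((k : ℝ) + 1) * (cQ a k : ℝ)) := by
          rw [Real.exp_sub]
      _ ≤ Real.exp (C - 1 - n) := by
          apply Real.exp_le_exp.2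
          have hk : (n : ℝ) + 1 ≤ (k : ℝ) := by
            rw [hkdef]; push_cast; linarith [Nat.cast_nonneg (α := ℝ) M]
          nlinarith [mul_nonneg (by linarith : (0:ℝ) ≤ (k : ℝ) + 1 - C)
            (by linarith : (0:ℝ) ≤ (cQ a k : ℝ) - 1)]
  · have h1 : (fun n : ℕ => Real.exp (C - 1 - n)) =
        fun n : ℕ => Real.exp (C - 1) * Real.exp (-1) ^ n := by
      funext n
      rw [← Real.exp_nat_mul, ← Real.exp_add]
      congr 1
      push_cast
      ring
    rw [h1]
    have h2 : Tendsto (fun n : ℕ => Real.exp (-1) ^ n) atTop (𝓝 0) :=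
      tendsto_pow_atTop_nhds_zero_of_lt_one (Real.exp_pos _).le
        (Real.exp_lt_one_iff.2 (by norm_num))
    simpa using h2.const_mul (Real.exp (C - 1))

set_option maxHeartbeats 2000000 in
lemma exists_WA_near (y : ℝ) (hy : Irrational y) {ε : ℝ} (hε : 0 < ε) :
    ∃ θ : ℝ, WellApproximated θ ∧ |y - θ| < ε := by
  obtain ⟨L, hL⟩ := exists_nat_gt (2 / ε)
  set b : ℕ → ℤ := fun k => cfA y k with hbdef
  have hb : Good b := cfA_good hy
  set M : ℕ := L + 1 with hMdef
  set a := aext b M with hadef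
  have ha : Good a := aext_good b M hb
  set θ := cfVal a with hθdef
  have hθirr : Irrational θ := irrational_cfVal ha
  refine ⟨θ, wa_cfVal b M hb, ?_⟩
  -- the two formulas
  have hfun : (fun k => cfA θ k) = a := funext (cfA_cfVal ha)
  have hyform := formula b (gaussIter y) (fun k => gauss_rec hy k)
    (fun k => one_lt_gauss hy k) L
  have hθform := formula (fun k => cfA θ k) (gaussIter θ) (fun k => gauss_rec hθirr k)
    (fun k => one_lt_gauss hθirr k) L
  rw [hfun] at hθform
  have hpre : ∀ k, k ≤ L + 1 → a k = b k := fun k hk => aext_prefix b M (by omega)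
  have hPQ1 := PQ_congr a b (L + 1) hpre
  have hPQ0 := PQ_congr a b L (fun k hk => hpre k (by omega))
  rw [hPQ1.1, hPQ1.2, hPQ0.1, hPQ0.2] at hθform
  have hy0 : gaussIter y 0 = y := rfl
  have hθ0 : gaussIter θ 0 = θ := rfl
  rw [hy0] at hyform
  rw [hθ0] at hθform
  set T : ℝ := gaussIter y (L + 2) with hTdef
  set S : ℝ := gaussIter θ (L + 2) with hSdef
  set Q1 : ℝ := (cQ b (L + 1) : ℝ) with hQ1def
  set Q0 : ℝ := (cQ b L : ℝ) with hQ0def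
  set P1 : ℝ := (cP b (L + 1) : ℝ) with hP1def
  set P0 : ℝ := (cP b L : ℝ) with hP0def
  have hT : 1 < T := one_lt_gauss hy (L + 1)
  have hS : 1 < S := one_lt_gauss hθirr (L + 1)
  have hQ1ge : ((L : ℝ) + 1) ≤ Q1 := by
    rw [hQ1def]; exact_mod_cast Q_ge hb (L + 1)
  have hQ1pos : (1 : ℝ) ≤ Q1 := by
    have : (0 : ℝ) ≤ (L : ℝ) := Nat.cast_nonneg L
    linarith
  have hQ0pos : (1 : ℝ) ≤ Q0 := by
    rw [hQ0def]; exact_mod_cast Q_pos hb L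
  have hDT : (0 : ℝ) < Q1 * T + Q0 := by nlinarith
  have hDS : (0 : ℝ) < Q1 * S + Q0 := by nlinarith
  have hyeq : y = (P1 * T + P0) / (Q1 * T + Q0) := by
    rw [eq_div_iff hDT.ne']
    linarith [hyform]
  have hθeq : θ = (P1 * S + P0) / (Q1 * S + Q0) := by
    rw [eq_div_iff hDS.ne']
    linarith [hθform]
  have hdet : P1 * Q0 - P0 * Q1 = (-1 : ℝ) ^ L := by
    rw [hP1def, hQ0def, hP0def, hQ1def]
    exact_mod_cast det b L
  have hdiff : y - θ = ((-1 : ℝ) ^ L * (T - S)) / ((Q1 * T + Q0) * (Q1 * S + Q0)) := by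
    rw [hyeq, hθeq, div_sub_div _ _ hDT.ne' hDS.ne']
    congr 1
    linear_combination (T - S) * hdet
  have habs : |y - θ| = |T - S| / ((Q1 * T + Q0) * (Q1 * S + Q0)) := by
    rw [hdiff, abs_div, abs_mul, abs_pow, abs_neg, abs_one, one_pow, one_mul,
      abs_of_pos (mul_pos hDT hDS)]
  have h1 : |T - S| ≤ T + S := by
    have := abs_sub T S
    rw [abs_of_pos (by linarith : (0:ℝ) < T), abs_of_pos (by linarith : (0:ℝ) < S)] at this
    exact this
  have hQ1n : (0:ℝ) ≤ Q1 := by linarith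
  have hQ0n : (0:ℝ) ≤ Q0 := by linarith
  have hTn : (0:ℝ) ≤ T := by linarith
  have hSn : (0:ℝ) ≤ S := by linarith
  have hTS : (0:ℝ) < T * S := by nlinarith
  have hQsq : (0:ℝ) < Q1 ^ 2 := by nlinarith
  have e1 : (0:ℝ) ≤ Q1 * T * Q0 := mul_nonneg (mul_nonneg hQ1n hTn) hQ0n
  have e2 : (0:ℝ) ≤ Q0 * (Q1 * S) := mul_nonneg hQ0n (mul_nonneg hQ1n hSn)
  have e3 : (0:ℝ) ≤ Q0 * Q0 := mul_nonneg hQ0n hQ0n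
  have hden : Q1 ^ 2 * (T * S) ≤ (Q1 * T + Q0) * (Q1 * S + Q0) := by nlinarith [e1, e2, e3]
  have h3 : |y - θ| ≤ (T + S) / (Q1 ^ 2 * (T * S)) := by
    rw [habs]
    exact div_le_div₀ (by linarith) h1 (mul_pos hQsq hTS) hden
  have hts : T + S ≤ 2 * (T * S) := by
    nlinarith [mul_nonneg (by linarith : (0:ℝ) ≤ T - 1) (by linarith : (0:ℝ) ≤ S - 1)]
  have h4 : (T + S) / (Q1 ^ 2 * (T * S)) ≤ 2 / Q1 ^ 2 := by
    rw [div_le_div_iff₀ (mul_pos hQsq hTS) hQsq]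
    nlinarith [mul_le_mul_of_nonneg_right hts hQsq.le]
  have h5 : 2 / Q1 ^ 2 < ε := by
    have hQL : 2 / ε < Q1 := by
      calc 2 / ε < (L : ℝ) := hL
        _ ≤ Q1 := by linarith
    have h2ε : 2 < ε * Q1 := by
      rw [div_lt_iff₀ hε] at hQL
      linarith
    rw [div_lt_iff₀ hQsq]
    nlinarith [mul_le_mul_of_nonneg_left hQ1pos (mul_pos hε (show (0:ℝ) < Q1 by linarith)).le]
  linarith

end WAaux

/-- The set of well-approximated irrational numbers is dense in `ℝ`. -/
theorem wellApproximated_dense : Dense {θ : ℝ | WellApproximated θ} := by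
  have hsub : {y : ℝ | Irrational y} ⊆ closure {θ : ℝ | WellApproximated θ} := by
    intro y hy
    rw [Metric.mem_closure_iff]
    intro ε hε
    obtain ⟨θ, hθ, hδ⟩ := WAaux.exists_WA_near y hy hε
    exact ⟨θ, hθ, by rwa [Real.dist_eq]⟩
  intro x
  have h2 : (Set.univ : Set ℝ) ⊆ closure {θ : ℝ | WellApproximated θ} := by
    rw [← dense_irrational.closure_eq]
    exact closure_minimal hsub isClosed_closure
  exact h2 (Set.mem_univ x)
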